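/- Let α, β, a, b, Λ be real numbers with β ≠ 0, Λ ≠ 0, and set Ω + 1 = (β(a+1) + α(1-b))/β. Suppose y : ℝ → ℝ and s : ℝ → ℝ are differentiable with y, y' positive, and Y : ℝ → ℝ satisfies Y(s(x)) = y(x)^α · y'(x)^β and s'(x) = Λ⁻¹ · y(x)^a · y'(x)^b for all x. If Ω ≠ -1, then the function x ↦ y(x)^(Ω+1)/(Λ(Ω+1)) differs by a constant from x ↦ ∫ Y(s)^((1-b)/β) ds evaluated along s(x); that is, d/dx [ y(x)^(Ω+1)/(Λ(Ω+1)) ] = Y(s(x))^((1-b)/β) · s'(x) for all x. -/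

import Mathlib

theorem stmt0 (α β a b Λ Ω : ℝ) (hβ : β ≠ 0) (hΛ : Λ ≠ 0)
    (hΩdef : Ω + 1 = (β * (a + 1) + α * (1 - b)) / β) (hΩ : Ω ≠ -1)
    (y y' s s' Y : ℝ → ℝ)
    (hy : ∀ x, HasDerivAt y (y' x) x)
    (hs : ∀ x, HasDerivAt s (s' x) x)
    (hypos : ∀ x, 0 < y x) (hy'pos : ∀ x, 0 < y' x)
    (hY : ∀ x, Y (s x) = y x ^ α * y' x ^ β)
    (hs' : ∀ x, s' x = Λ⁻¹ * y x ^ a * y' x ^ b) :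
    ∀ x, HasDerivAt (fun t => y t ^ (Ω + 1) / (Λ * (Ω + 1)))
      (Y (s x) ^ ((1 - b) / β) * s' x) x := by
  intro x
  have hΩ1 : Ω + 1 ≠ 0 := by
    intro h; apply hΩ; linarith
  have h1 := (((hy x).rpow_const (p := Ω + 1) (Or.inl (hypos x).ne'))).div_const (Λ * (Ω + 1))
  convert h1 using 1
  case e'_4 => rfl
  case e'_5 => rfl
  have hyx := hypos x
  have hy'x := hy'pos x
  have hΩeq : Ω = a + α * (1 - b) / β := by
    field_simp at hΩdef; field_simp; linarith
  rw [hY, hs', Real.mul_rpow (Real.rpow_nonneg hyx.le _) (Real.rpow_nonneg hy'x.le _),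
    ← Real.rpow_mul hyx.le, ← Real.rpow_mul hy'x.le]
  rw [show β * ((1 - b) / β) = 1 - b by field_simp]
  rw [show Ω + 1 - 1 = Ω by ring]
  have e1 : y' x ^ (1 - b) * y' x ^ b = y' x := by
    rw [← Real.rpow_add hy'x]; simp
  have e2 : y x ^ (α * ((1 - b) / β)) * y x ^ a = y x ^ Ω := by
    rw [← Real.rpow_add hyx, hΩeq]; congr 1; ring
  rw [show y x ^ (α * ((1 - b) / β)) * y' x ^ (1 - b) * (Λ⁻¹ * y x ^ a * y' x ^ b)
      = Λ⁻¹ * (y x ^ (α * ((1 - b) / β)) * y x ^ a) * (y' x ^ (1 - b) * y' x ^ b) from by ring,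
    e1, e2]
  field_simp
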